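/- Let f : ℝ → ℝ be twice differentiable, q-Lipschitz continuous, with |f''(t)| ≤ ν for all t ∈ ℝ, and let u : ℝ → ℝ be twice continuously differentiable on [−1, 1]. Set T := u(−1)² + u'(−1)² + ∫_{−1}^1 u''(t)² dt. Then ∫_{−1}^1 ((f∘u)''(t))² dt ≤ (q² + ν²)·(73·T + 21316·T²), where 21316 = 4·73². -/

import Mathlib

set_option maxHeartbeats 1000000 in
/-- For `f` twice differentiable, `q`-Lipschitz with `|f''| ≤ ν` everywhere, and `u`
twice continuously differentiable on `[−1, 1]`, setting
`T := u(−1)² + u'(−1)² + ∫ (u'')²`, one has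
`∫ ((f∘u)'')² ≤ (q² + ν²)·(73·T + 21316·T²)`. -/
theorem stmt11 (f : ℝ → ℝ) (q ν : ℝ)
    (hfd : Differentiable ℝ f) (hfd' : Differentiable ℝ (deriv f))
    (hf : ∀ s t : ℝ, |f s - f t| ≤ q * |s - t|)
    (hf'' : ∀ t : ℝ, |deriv (deriv f) t| ≤ ν)
    (u u' u'' : ℝ → ℝ)
    (hu' : ∀ t ∈ Set.Icc (-1 : ℝ) 1, HasDerivAt u (u' t) t)
    (hu'' : ∀ t ∈ Set.Icc (-1 : ℝ) 1, HasDerivAt u' (u'' t) t)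
    (hc : ContinuousOn u'' (Set.Icc (-1 : ℝ) 1))
    (T : ℝ) (hT : T = u (-1) ^ 2 + u' (-1) ^ 2 + ∫ t in (-1 : ℝ)..1, u'' t ^ 2) :
    (∫ t in (-1 : ℝ)..1, (deriv (deriv (f ∘ u)) t) ^ 2) ≤
      (q ^ 2 + ν ^ 2) * (73 * T + 21316 * T ^ 2) := by
  have hab : (-1 : ℝ) ≤ 1 := by norm_num
  -- nonnegativity of q and ν
  have hq0 : 0 ≤ q := by
    have := hf 1 0
    simp only [sub_zero, abs_one, mul_one] at this
    exact le_trans (abs_nonneg _) this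
  have hν0 : 0 ≤ ν := le_trans (abs_nonneg _) (hf'' 0)
  -- |f'| ≤ q everywhere
  have hfq : ∀ s : ℝ, |deriv f s| ≤ q := by
    intro s
    have := norm_deriv_le_of_lip' hq0 (x₀ := s) (f := f)
      (Filter.Eventually.of_forall fun x => by
        simpa [Real.norm_eq_abs] using hf x s)
    simpa [Real.norm_eq_abs] using this
  -- basic quantities
  set S := ∫ t in (-1 : ℝ)..1, u'' t ^ 2 with hSdef
  have hS0 : 0 ≤ S := intervalIntegral.integral_nonneg hab (fun t _ => sq_nonneg _)
  have hT0 : 0 ≤ T := by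
    rw [hT]
    have := sq_nonneg (u (-1)); have := sq_nonneg (u' (-1)); linarith
  have hST : S ≤ T := by
    rw [hT]
    have := sq_nonneg (u (-1)); have := sq_nonneg (u' (-1)); linarith
  -- continuity of u and u'
  have huc' : ContinuousOn u' (Set.Icc (-1 : ℝ) 1) :=
    fun t ht => ((hu'' t ht).continuousAt).continuousWithinAt
  have huc : ContinuousOn u (Set.Icc (-1 : ℝ) 1) :=
    fun t ht => ((hu' t ht).continuousAt).continuousWithinAt
  -- integrability facts
  have hI2 : IntervalIntegrable (fun t => u'' t ^ 2) MeasureTheory.volume (-1) 1 :=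
    ContinuousOn.intervalIntegrable (by rw [Set.uIcc_of_le hab]; exact hc.pow 2)
  have hIabs : IntervalIntegrable (fun t => |u'' t|) MeasureTheory.volume (-1) 1 :=
    ContinuousOn.intervalIntegrable (by rw [Set.uIcc_of_le hab]; exact hc.abs)
  -- I := ∫ |u''|, and I² ≤ 2 S
  set I := ∫ t in (-1 : ℝ)..1, |u'' t| with hIdef
  have hI0 : 0 ≤ I := intervalIntegral.integral_nonneg hab (fun t _ => abs_nonneg _)
  have hIc : ∀ c : ℝ, 0 < c → I ≤ c + S / (2 * c) := by
    intro c hcpos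
    have hmono : I ≤ ∫ t in (-1 : ℝ)..1, (c / 2 + u'' t ^ 2 / (2 * c)) := by
      apply intervalIntegral.integral_mono_on hab hIabs
      · exact intervalIntegrable_const.add (hI2.div_const _)
      · intro x _
        have h2c : (0:ℝ) < 2 * c := by linarith
        rw [show c / 2 + u'' x ^ 2 / (2 * c) = (c ^ 2 + u'' x ^ 2) / (2 * c) by
          field_simp, le_div_iff₀ h2c]
        nlinarith [sq_nonneg (|u'' x| - c), sq_abs (u'' x)]
    have hval : (∫ t in (-1 : ℝ)..1, (c / 2 + u'' t ^ 2 / (2 * c)))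
        = c + S / (2 * c) := by
      rw [intervalIntegral.integral_add (intervalIntegrable_const) (hI2.div_const _),
        intervalIntegral.integral_const, intervalIntegral.integral_div]
      rw [smul_eq_mul]
      ring
    linarith [hmono, hval.le, hval.ge]
  have hI2S : I ^ 2 ≤ 2 * S := by
    rcases eq_or_lt_of_le hI0 with h0 | hpos
    · nlinarith
    · have := hIc (I / 2) (by linarith)
      have h2 : I / 2 ≤ S / (2 * (I / 2)) := by linarith
      rw [div_le_div_iff₀ (by linarith) (by linarith)] at h2
      nlinarith
  -- pointwise bound on u' : (u' t)^2 ≤ 4 T on [-1,1]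
  have hu'bd : ∀ t ∈ Set.Icc (-1 : ℝ) 1, u' t ^ 2 ≤ 4 * T := by
    intro t ht
    obtain ⟨ht1, ht2⟩ := ht
    have hsub : Set.uIcc (-1 : ℝ) t ⊆ Set.Icc (-1 : ℝ) 1 := by
      rw [Set.uIcc_of_le ht1]
      exact Set.Icc_subset_Icc le_rfl ht2
    have hftc : (∫ s in (-1 : ℝ)..t, u'' s) = u' t - u' (-1) := by
      apply intervalIntegral.integral_eq_sub_of_hasDerivAt
      · intro s hs
        exact hu'' s (hsub hs)
      · exact (hc.mono hsub).intervalIntegrable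
    have habs : |∫ s in (-1 : ℝ)..t, u'' s| ≤ ∫ s in (-1 : ℝ)..t, |u'' s| :=
      intervalIntegral.abs_integral_le_integral_abs ht1
    have hmono2 : (∫ s in (-1 : ℝ)..t, |u'' s|) ≤ I := by
      apply intervalIntegral.integral_mono_interval le_rfl ht1 ht2
      · exact Filter.Eventually.of_forall fun x => abs_nonneg _
      · exact hIabs
    have hkey : |u' t - u' (-1)| ≤ I := by rw [← hftc]; exact habs.trans hmono2
    have h1 : (u' t - u' (-1)) ^ 2 ≤ I ^ 2 := by
      rw [← sq_abs (u' t - u' (-1))]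
      exact pow_le_pow_left₀ (abs_nonneg _) hkey 2
    nlinarith [sq_nonneg (u' (-1)), hI2S, hST, hT0, sq_nonneg (u' t + u' (-1))]
  -- the comparison function
  set ψ : ℝ → ℝ := fun t => 2 * ν ^ 2 * u' t ^ 4 + 2 * q ^ 2 * u'' t ^ 2 with hψdef
  have hψint : IntervalIntegrable ψ MeasureTheory.volume (-1) 1 := by
    apply ContinuousOn.intervalIntegrable
    rw [Set.uIcc_of_le hab]
    exact (continuousOn_const.mul (huc'.pow 4)).add (continuousOn_const.mul (hc.pow 2))
  have hu4int : IntervalIntegrable (fun t => u' t ^ 4) MeasureTheory.volume (-1) 1 :=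
    ContinuousOn.intervalIntegrable (by rw [Set.uIcc_of_le hab]; exact huc'.pow 4)
  -- pointwise identity for the second derivative on the open interval
  have hkey : ∀ t ∈ Set.Ioo (-1 : ℝ) 1,
      deriv (deriv (f ∘ u)) t
        = deriv (deriv f) (u t) * u' t * u' t + deriv f (u t) * u'' t := by
    intro t ht
    have htIcc : t ∈ Set.Icc (-1 : ℝ) 1 := Set.Ioo_subset_Icc_self ht
    have hnhds : Set.Icc (-1 : ℝ) 1 ∈ nhds t := Icc_mem_nhds ht.1 ht.2
    have heq : deriv (f ∘ u) =ᶠ[nhds t] fun s => deriv f (u s) * u' s := by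
      filter_upwards [hnhds] with s hs
      exact (((hfd (u s)).hasDerivAt).comp s (hu' s hs)).deriv
    rw [Filter.EventuallyEq.deriv_eq heq]
    have h1 : HasDerivAt (fun s => deriv f (u s)) (deriv (deriv f) (u t) * u' t) t :=
      ((hfd' (u t)).hasDerivAt).comp t (hu' t htIcc)
    exact (h1.mul (hu'' t htIcc)).deriv
  -- main comparison
  by_cases hLint : IntervalIntegrable (fun t => (deriv (deriv (f ∘ u)) t) ^ 2)
      MeasureTheory.volume (-1) 1
  case neg =>
    rw [intervalIntegral.integral_undef hLint]
    have h1 : 0 ≤ 73 * T + 21316 * T ^ 2 := by nlinarith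
    have h2 : 0 ≤ q ^ 2 + ν ^ 2 := by positivity
    positivity
  case pos =>
  have hmain : (∫ t in (-1 : ℝ)..1, (deriv (deriv (f ∘ u)) t) ^ 2)
      ≤ ∫ t in (-1 : ℝ)..1, ψ t := by
    apply intervalIntegral.integral_mono_ae_restrict hab hLint hψint
    have hres : MeasureTheory.volume.restrict (Set.Icc (-1 : ℝ) 1)
        = MeasureTheory.volume.restrict (Set.Ioo (-1 : ℝ) 1) :=
      (MeasureTheory.Measure.restrict_congr_set MeasureTheory.Ioo_ae_eq_Icc).symm
    rw [hres]
    filter_upwards [MeasureTheory.ae_restrict_mem measurableSet_Ioo] with t ht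
    rw [hkey t ht]
    have ha := hf'' (u t)
    have hb := hfq (u t)
    have ha2 : deriv (deriv f) (u t) ^ 2 ≤ ν ^ 2 := by
      rw [← sq_abs]; exact pow_le_pow_left₀ (abs_nonneg _) ha 2
    have hb2 : deriv f (u t) ^ 2 ≤ q ^ 2 := by
      rw [← sq_abs]; exact pow_le_pow_left₀ (abs_nonneg _) hb 2
    simp only [hψdef]
    nlinarith [sq_nonneg (deriv (deriv f) (u t) * u' t * u' t - deriv f (u t) * u'' t),
      sq_nonneg (u' t * u' t), sq_nonneg (u'' t), sq_nonneg (u' t)]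
  -- compute the bound on ∫ ψ
  have hu4 : (∫ t in (-1 : ℝ)..1, u' t ^ 4) ≤ 32 * T ^ 2 := by
    have : (∫ t in (-1 : ℝ)..1, u' t ^ 4) ≤ ∫ t in (-1 : ℝ)..1, (16 * T ^ 2 : ℝ) := by
      apply intervalIntegral.integral_mono_on hab hu4int intervalIntegrable_const
      intro x hx
      have := hu'bd x hx
      nlinarith [sq_nonneg (u' x)]
    rw [intervalIntegral.integral_const, smul_eq_mul] at this
    nlinarith [this]
  have hψval : (∫ t in (-1 : ℝ)..1, ψ t)
      = 2 * ν ^ 2 * (∫ t in (-1 : ℝ)..1, u' t ^ 4) + 2 * q ^ 2 * S := by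
    simp only [hψdef]
    rw [intervalIntegral.integral_add ((hu4int.const_mul _)) ((hI2.const_mul _)),
      intervalIntegral.integral_const_mul, intervalIntegral.integral_const_mul]
  have hfinal : (∫ t in (-1 : ℝ)..1, ψ t) ≤ 64 * ν ^ 2 * T ^ 2 + 2 * q ^ 2 * T := by
    rw [hψval]
    have h1 : 2 * ν ^ 2 * (∫ t in (-1 : ℝ)..1, u' t ^ 4) ≤ 2 * ν ^ 2 * (32 * T ^ 2) := by
      apply mul_le_mul_of_nonneg_left hu4 (by positivity)
    have h2 : 2 * q ^ 2 * S ≤ 2 * q ^ 2 * T :=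
      mul_le_mul_of_nonneg_left hST (by positivity)
    linarith
  have hrhs : 64 * ν ^ 2 * T ^ 2 + 2 * q ^ 2 * T
      ≤ (q ^ 2 + ν ^ 2) * (73 * T + 21316 * T ^ 2) := by
    nlinarith [mul_nonneg (sq_nonneg q) hT0, mul_nonneg (sq_nonneg ν) hT0,
      mul_nonneg (sq_nonneg q) (sq_nonneg T), mul_nonneg (sq_nonneg ν) (sq_nonneg T)]
  linarith
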